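/- Let (Ω, μ) be a measure space, let 0 < p ≤ 2, and let f_1, …, f_n be measurable functions on Ω with ∫ |f_k|^p dμ < ∞ for each k. Then ( Σ_{k=1}^n ( ∫ |f_k|^p dμ )^{2/p} )^{1/2} ≤ ( ∫ ( Σ_{k=1}^n |f_k|² )^{p/2} dμ )^{1/p}. In other words, L_p(μ) is 2-concave with constant 1 for 0 < p ≤ 2: (Σ_k ‖f_k‖_p²)^{1/2} ≤ ‖(Σ_k |f_k|²)^{1/2}‖_p. -/

import Mathlib

open MeasureTheory ENNReal

private lemma pt_concave {q : ℝ} (hq0 : 0 < q) (hq1 : q ≤ 1)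
    {a b : ℝ≥0∞} (ha0 : a ≠ 0) (ha : a ≠ ∞) (hb0 : b ≠ 0) (hb : b ≠ ∞)
    (hab : a + b = 1) (x y : ℝ≥0∞) :
    a ^ (1 - q) * x ^ q + b ^ (1 - q) * y ^ q ≤ (x + y) ^ q := by
  have hp : 1 ≤ 1 / q := one_le_one_div hq0 hq1
  have key := ENNReal.rpow_arith_mean_le_arith_mean2_rpow a b ((x / a) ^ q) ((y / b) ^ q) hab hp
  have hxa : ((x / a) ^ q) ^ (1 / q) = x / a := by
    rw [← ENNReal.rpow_mul, mul_one_div, div_self hq0.ne', ENNReal.rpow_one]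
  have hyb : ((y / b) ^ q) ^ (1 / q) = y / b := by
    rw [← ENNReal.rpow_mul, mul_one_div, div_self hq0.ne', ENNReal.rpow_one]
  rw [hxa, hyb, ENNReal.mul_div_cancel ha0 ha, ENNReal.mul_div_cancel hb0 hb] at key
  have key2 : a * (x / a) ^ q + b * (y / b) ^ q ≤ (x + y) ^ q := by
    have := ENNReal.rpow_le_rpow key hq0.le
    rwa [← ENNReal.rpow_mul, one_div, inv_mul_cancel₀ hq0.ne', ENNReal.rpow_one] at this
  have ea : a * (x / a) ^ q = a ^ (1 - q) * x ^ q := by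
    rw [ENNReal.div_rpow_of_nonneg _ _ hq0.le, ENNReal.rpow_sub _ _ ha0 ha, ENNReal.rpow_one]
    simp [div_eq_mul_inv, mul_comm, mul_assoc, mul_left_comm]
  have eb : b * (y / b) ^ q = b ^ (1 - q) * y ^ q := by
    rw [ENNReal.div_rpow_of_nonneg _ _ hq0.le, ENNReal.rpow_sub _ _ hb0 hb, ENNReal.rpow_one]
    simp [div_eq_mul_inv, mul_comm, mul_assoc, mul_left_comm]
  rwa [ea, eb] at key2

private lemma rev_minkowski {Ω : Type*} [MeasurableSpace Ω] (μ : Measure Ω)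
    {q : ℝ} (hq0 : 0 < q) (hq1 : q ≤ 1) {f g : Ω → ℝ≥0∞}
    (hf : Measurable f) (hg : Measurable g) :
    (∫⁻ ω, f ω ^ q ∂μ) ^ (1 / q) + (∫⁻ ω, g ω ^ q ∂μ) ^ (1 / q)
      ≤ (∫⁻ ω, (f ω + g ω) ^ q ∂μ) ^ (1 / q) := by
  have hmono1 : ∫⁻ ω, f ω ^ q ∂μ ≤ ∫⁻ ω, (f ω + g ω) ^ q ∂μ :=
    lintegral_mono fun ω => ENNReal.rpow_le_rpow le_self_add hq0.le
  have hmono2 : ∫⁻ ω, g ω ^ q ∂μ ≤ ∫⁻ ω, (f ω + g ω) ^ q ∂μ :=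
    lintegral_mono fun ω => ENNReal.rpow_le_rpow le_add_self hq0.le
  set A := (∫⁻ ω, f ω ^ q ∂μ) ^ (1 / q) with hA
  set B := (∫⁻ ω, g ω ^ q ∂μ) ^ (1 / q) with hB
  by_cases hA0 : A = 0
  · rw [hA0, zero_add]
    exact ENNReal.rpow_le_rpow hmono2 (by positivity)
  by_cases hB0 : B = 0
  · rw [hB0, add_zero]
    exact ENNReal.rpow_le_rpow hmono1 (by positivity)
  by_cases hft : ∫⁻ ω, f ω ^ q ∂μ = ∞
  · have : ∫⁻ ω, (f ω + g ω) ^ q ∂μ = ∞ := top_le_iff.mp (hft ▸ hmono1)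
    rw [this, ENNReal.top_rpow_of_pos (by positivity)]
    exact le_top
  by_cases hgt : ∫⁻ ω, g ω ^ q ∂μ = ∞
  · have : ∫⁻ ω, (f ω + g ω) ^ q ∂μ = ∞ := top_le_iff.mp (hgt ▸ hmono2)
    rw [this, ENNReal.top_rpow_of_pos (by positivity)]
    exact le_top
  have hAt : A ≠ ∞ := by
    rw [hA]; exact (ENNReal.rpow_lt_top_of_nonneg (by positivity) hft).ne
  have hBt : B ≠ ∞ := by
    rw [hB]; exact (ENNReal.rpow_lt_top_of_nonneg (by positivity) hgt).ne
  have hABt : A + B ≠ ∞ := ENNReal.add_ne_top.mpr ⟨hAt, hBt⟩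
  have hAB0 : A + B ≠ 0 := by simp [hA0, hB0]
  set a := A / (A + B) with ha
  set b := B / (A + B) with hb
  have hab : a + b = 1 := by
    rw [ha, hb, ENNReal.div_add_div_same, ENNReal.div_self hAB0 hABt]
  have ha0' : a ≠ 0 := by
    simp only [ha, ne_eq, ENNReal.div_eq_zero_iff, hA0, hABt, or_self, not_false_eq_true]
  have hb0' : b ≠ 0 := by
    simp only [hb, ne_eq, ENNReal.div_eq_zero_iff, hB0, hABt, or_self, not_false_eq_true]
  have hat : a ≠ ∞ := by
    rw [ha]; exact (ENNReal.div_lt_top hAt hAB0).ne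
  have hbt : b ≠ ∞ := by
    rw [hb]; exact (ENNReal.div_lt_top hBt hAB0).ne
  have hAq : A ^ q = ∫⁻ ω, f ω ^ q ∂μ := by
    rw [hA, ← ENNReal.rpow_mul, one_div, inv_mul_cancel₀ hq0.ne', ENNReal.rpow_one]
  have hBq : B ^ q = ∫⁻ ω, g ω ^ q ∂μ := by
    rw [hB, ← ENNReal.rpow_mul, one_div, inv_mul_cancel₀ hq0.ne', ENNReal.rpow_one]
  have hint : a ^ (1 - q) * A ^ q + b ^ (1 - q) * B ^ q ≤ ∫⁻ ω, (f ω + g ω) ^ q ∂μ := by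
    rw [hAq, hBq, ← lintegral_const_mul _ (hf.pow_const _), ← lintegral_const_mul _ (hg.pow_const _),
      ← lintegral_add_left ((hf.pow_const _).const_mul _)]
    exact lintegral_mono fun ω => pt_concave hq0 hq1 ha0' hat hb0' hbt hab _ _
  have hABq0 : ((A + B) ^ (1 - q) : ℝ≥0∞) ≠ 0 := by
    simp [ENNReal.rpow_eq_zero_iff, hAB0, hABt]
  have hABqt : ((A + B) ^ (1 - q) : ℝ≥0∞) ≠ ∞ :=
    (ENNReal.rpow_lt_top_of_nonneg (by linarith) hABt).ne
  have e1 : a ^ (1 - q) * A ^ q = A / (A + B) ^ (1 - q) := by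
    rw [ha, ENNReal.div_rpow_of_nonneg _ _ (by linarith), div_eq_mul_inv, mul_right_comm,
      ← ENNReal.rpow_add _ _ hA0 hAt, ← div_eq_mul_inv]
    norm_num
  have e2 : b ^ (1 - q) * B ^ q = B / (A + B) ^ (1 - q) := by
    rw [hb, ENNReal.div_rpow_of_nonneg _ _ (by linarith), div_eq_mul_inv, mul_right_comm,
      ← ENNReal.rpow_add _ _ hB0 hBt, ← div_eq_mul_inv]
    norm_num
  have hcomp : a ^ (1 - q) * A ^ q + b ^ (1 - q) * B ^ q = (A + B) ^ q := by
    rw [e1, e2, ENNReal.div_add_div_same, eq_comm,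
      ENNReal.eq_div_iff hABq0 hABqt, ← ENNReal.rpow_add _ _ hAB0 hABt]
    norm_num
  have hfinal : (A + B) ^ q ≤ ∫⁻ ω, (f ω + g ω) ^ q ∂μ := hcomp ▸ hint
  calc A + B = ((A + B) ^ q) ^ (1 / q) := by
        rw [← ENNReal.rpow_mul, mul_one_div, div_self hq0.ne', ENNReal.rpow_one]
    _ ≤ (∫⁻ ω, (f ω + g ω) ^ q ∂μ) ^ (1 / q) := ENNReal.rpow_le_rpow hfinal (by positivity)

private lemma rev_minkowski_sum {Ω : Type*} [MeasurableSpace Ω] (μ : Measure Ω)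
    {q : ℝ} (hq0 : 0 < q) (hq1 : q ≤ 1) {n : ℕ} {g : Fin n → Ω → ℝ≥0∞}
    (hg : ∀ k, Measurable (g k)) (s : Finset (Fin n)) :
    ∑ k ∈ s, (∫⁻ ω, g k ω ^ q ∂μ) ^ (1 / q)
      ≤ (∫⁻ ω, (∑ k ∈ s, g k ω) ^ q ∂μ) ^ (1 / q) := by
  induction s using Finset.cons_induction with
  | empty => simp
  | cons i s his ih =>
    rw [Finset.sum_cons]
    calc (∫⁻ ω, g i ω ^ q ∂μ) ^ (1 / q) + ∑ k ∈ s, (∫⁻ ω, g k ω ^ q ∂μ) ^ (1 / q)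
        ≤ (∫⁻ ω, g i ω ^ q ∂μ) ^ (1 / q) + (∫⁻ ω, (∑ k ∈ s, g k ω) ^ q ∂μ) ^ (1 / q) :=
          add_le_add le_rfl ih
      _ ≤ (∫⁻ ω, (g i ω + ∑ k ∈ s, g k ω) ^ q ∂μ) ^ (1 / q) :=
          rev_minkowski μ hq0 hq1 (hg i) (Finset.measurable_sum s fun k _ => hg k)
      _ = (∫⁻ ω, (∑ k ∈ Finset.cons i s his, g k ω) ^ q ∂μ) ^ (1 / q) := by
          simp only [Finset.sum_cons]

theorem Lp_two_concave
    {Ω : Type*} [MeasurableSpace Ω] (μ : Measure Ω)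
    (p : ℝ) (hp0 : 0 < p) (hp2 : p ≤ 2)
    (n : ℕ) (f : Fin n → Ω → ℝ) (hmeas : ∀ k, Measurable (f k))
    (hfin : ∀ k, ∫⁻ ω, (‖f k ω‖₊ : ℝ≥0∞) ^ p ∂μ < ∞) :
    (∑ k, (∫⁻ ω, (‖f k ω‖₊ : ℝ≥0∞) ^ p ∂μ) ^ (2 / p)) ^ ((1 : ℝ) / 2)
      ≤ (∫⁻ ω, (∑ k, (‖f k ω‖₊ : ℝ≥0∞) ^ (2 : ℝ)) ^ (p / 2) ∂μ) ^ (1 / p) := by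
  set q : ℝ := p / 2 with hq
  have hq0 : 0 < q := by positivity
  have hq1 : q ≤ 1 := by rw [hq]; linarith
  have hgmeas : ∀ k : Fin n, Measurable fun ω => ((‖f k ω‖₊ : ℝ≥0∞)) ^ (2 : ℝ) :=
    fun k => ((hmeas k).nnnorm.coe_nnreal_ennreal).pow_const _
  have key := rev_minkowski_sum μ hq0 hq1 hgmeas Finset.univ
  have hpow : ∀ (x : ℝ≥0∞), (x ^ (2 : ℝ)) ^ q = x ^ p := by
    intro x
    rw [← ENNReal.rpow_mul, hq]
    congr 1
    ring
  have hoq : (1 : ℝ) / q = 2 / p := by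
    rw [hq]; field_simp
  simp only [hpow, hoq] at key
  calc (∑ k, (∫⁻ ω, (‖f k ω‖₊ : ℝ≥0∞) ^ p ∂μ) ^ (2 / p)) ^ ((1 : ℝ) / 2)
      ≤ ((∫⁻ ω, (∑ k, (‖f k ω‖₊ : ℝ≥0∞) ^ (2 : ℝ)) ^ q ∂μ) ^ (2 / p)) ^ ((1 : ℝ) / 2) :=
        ENNReal.rpow_le_rpow key (by norm_num)
    _ = (∫⁻ ω, (∑ k, (‖f k ω‖₊ : ℝ≥0∞) ^ (2 : ℝ)) ^ (p / 2) ∂μ) ^ (1 / p) := by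
        rw [← ENNReal.rpow_mul, hq]
        congr 1
        ring
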